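/- arXiv:math-ph/9807019 — 2 statements merged into one kernel-verified Lean document; each statement's English description precedes it below -/
import Mathlib

section
/- For parameters a, b with a, b > -1, a nonnegative integer j, and any complex c, the integral ∫_{-1}^{1} (1-r)^a (1+r)^b P_j^{(a,b)}(r) e^{cr} dr equals 2^{a+b+1} · (Γ(a+j+1)Γ(b+j+1) / (j! Γ(a+b+2j+2))) · e^{-c} (2c)^j · ₁F₁(b+j+1; a+b+2j+2; 2c), where P_j^{(a,b)} is the Jacobi polynomial. -/
open Complex Finset

/-- Pochhammer symbol `(a)_n` for complex `a`. -/
noncomputable def poch (a : ℂ) (n : ℕ) : ℂ := ∏ i ∈ Finset.range n, (a + i)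

/-- Confluent hypergeometric function `₁F₁(a; b; x)`. -/
noncomputable def F11 (a b x : ℂ) : ℂ :=
  ∑' k : ℕ, poch a k * x ^ k / (poch b k * k.factorial)

/-- Gauss hypergeometric function `₂F₁(a, b; c; x)`. -/
noncomputable def F21 (a b c x : ℂ) : ℂ :=
  ∑' k : ℕ, poch a k * poch b k * x ^ k / (poch c k * k.factorial)

/-- Generalized Laguerre polynomial `L_n^{(α)}(x)`. -/
noncomputable def laguerre (n : ℕ) (α x : ℂ) : ℂ :=
  poch (α + 1) n / n.factorial * F11 (-(n : ℂ)) (α + 1) x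

/-- Jacobi polynomial `P_j^{(a,b)}(r)`. -/
noncomputable def jacobiP (j : ℕ) (a b r : ℂ) : ℂ :=
  poch (a + 1) j / j.factorial * F21 (-(j : ℂ)) ((j : ℂ) + a + b + 1) (a + 1) ((1 - r) / 2)

set_option maxHeartbeats 1600000

open MeasureTheory intervalIntegral

namespace JacobiAux

noncomputable def Bt (A B : ℝ) : ℂ :=
  (((2:ℝ)^(A+B+1) * (Real.Gamma (A+1) * Real.Gamma (B+1) / Real.Gamma (A+B+2)) : ℝ) : ℂ)

lemma exp_tsum (z : ℂ) : Complex.exp z = ∑' n : ℕ, z^n / n.factorial := by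
  rw [Complex.exp_eq_exp_ℂ, NormedSpace.exp_eq_tsum_div]

lemma poch_zero (a : ℂ) : poch a 0 = 1 := by simp [poch]

lemma poch_succ (a : ℂ) (n : ℕ) : poch a (n+1) = poch a n * (a + n) := by
  simp [poch, Finset.prod_range_succ]

lemma poch_succ' (a : ℂ) (n : ℕ) : poch a (n+1) = a * poch (a+1) n := by
  rw [poch, Finset.prod_range_succ', poch]
  simp only [Nat.cast_add, Nat.cast_one, Nat.cast_zero, add_zero]
  rw [mul_comm]
  congr 1
  exact Finset.prod_congr rfl fun i _ => by ring

lemma key_id (j : ℕ) : ∀ c t : ℂ, ∑ m ∈ Finset.range (j+1),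
    (-1:ℂ)^m * (j.choose m) * poch c m * poch (c + m + t) (j - m) = poch t j := by
  induction j with
  | zero => intro c t; simp [poch]
  | succ j ih =>
    intro c t
    set g : ℕ → ℂ := fun m => (-1:ℂ)^m * (j.choose m) * poch c m * poch (c + m + t) (j + 1 - m) with hg
    set h : ℕ → ℂ := fun m => (-1:ℂ)^m * (j.choose m) * poch (c+1) m * poch ((c+1) + m + t) (j - m) with hh
    have step1 : ∑ m ∈ Finset.range (j+2),
        (-1:ℂ)^m * ((j+1).choose m) * poch c m * poch (c + m + t) (j + 1 - m)
        = (∑ m ∈ Finset.range (j+2), g m) - c * ∑ m ∈ Finset.range (j+1), h m := by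
      rw [Finset.sum_range_succ' (fun m => (-1:ℂ)^m * ((j+1).choose m) * poch c m * poch (c + m + t) (j + 1 - m)) (j+1),
        Finset.sum_range_succ' g (j+1)]
      have e1 : ∀ i ∈ Finset.range (j+1),
          (-1:ℂ)^(i+1) * ((j+1).choose (i+1)) * poch c (i+1) * poch (c + ((i:ℕ)+1 : ℕ) + t) (j + 1 - (i+1))
          = g (i+1) - c * h i := by
        intro i hi
        have hch : (((j+1).choose (i+1) : ℕ) : ℂ) = (j.choose (i+1) : ℂ) + (j.choose i : ℂ) := by
          rw [Nat.choose_succ_succ]; push_cast; ring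
        have hp : poch c (i+1) = c * poch (c+1) i := poch_succ' c i
        have hidx : j + 1 - (i+1) = j - i := by omega
        have harg : ((c : ℂ) + ((i:ℕ)+1 : ℕ) + t) = ((c+1) + i + t) := by push_cast; ring
        rw [hch, hidx, harg, hg, hh]
        simp only []
        rw [hp]
        have hidx2 : j + 1 - (i+1) = j - i := by omega
        rw [hidx2]
        have harg2 : ((c : ℂ) + ((i+1 : ℕ) : ℂ) + t) = ((c+1) + i + t) := by push_cast; ring
        rw [harg2]
        ring
      rw [Finset.sum_congr rfl e1, Finset.sum_sub_distrib, ← Finset.mul_sum]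
      have e0 : (-1:ℂ)^0 * ((j+1).choose 0) * poch c 0 * poch (c + (0:ℕ) + t) (j + 1 - 0) = g 0 := by
        simp [hg]
      rw [e0]; ring
    rw [step1]
    have e2 : ∑ m ∈ Finset.range (j+2), g m = (c + j + t) * poch t j := by
      rw [Finset.sum_range_succ]
      have : g (j+1) = 0 := by simp [hg, Nat.choose_succ_self]
      rw [this, add_zero]
      have e3 : ∀ m ∈ Finset.range (j+1), g m
          = ((-1:ℂ)^m * (j.choose m) * poch c m * poch (c + m + t) (j - m)) * (c + j + t) := by
        intro m hm
        rw [Finset.mem_range] at hm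
        have hidx : j + 1 - m = (j - m) + 1 := by omega
        rw [hg]; simp only []
        rw [hidx, poch_succ]
        have harg : (c + m + t + ((j - m : ℕ) : ℂ)) = c + j + t := by
          push_cast [Nat.cast_sub (by omega : m ≤ j)]; ring
        rw [harg]; ring
      rw [Finset.sum_congr rfl e3, ← Finset.sum_mul, ih c t]; ring
    rw [e2, ih (c+1) t, poch_succ]
    ring

lemma poch_ofReal (x : ℝ) (n : ℕ) : poch (x:ℂ) n = ((∏ i ∈ Finset.range n, (x+i) : ℝ) : ℂ) := by
  rw [poch]; push_cast; rfl

lemma rpoch_pos {x : ℝ} (hx : 0 < x) (n : ℕ) : 0 < ∏ i ∈ Finset.range n, (x+i) :=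
  Finset.prod_pos fun i _ => by positivity

lemma Gamma_add_nat (x : ℝ) (hx : 0 < x) (n : ℕ) :
    Real.Gamma (x + n) = Real.Gamma x * ∏ i ∈ Finset.range n, (x+i) := by
  induction n with
  | zero => simp
  | succ n ih =>
    have : x + (n+1 : ℕ) = (x + n) + 1 := by push_cast; ring
    rw [this, Real.Gamma_add_one (by positivity), ih, Finset.prod_range_succ]
    ring

lemma poch_neg_nat (j m : ℕ) : poch (-(j:ℂ)) m = (-1)^m * (j.descFactorial m : ℂ) := by
  induction m with
  | zero => simp [poch]
  | succ m ih =>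
    rw [poch, Finset.prod_range_succ, ← poch, ih]
    rcases lt_or_ge m j with h | h
    · rw [Nat.descFactorial_succ]
      push_cast [Nat.cast_sub h.le]
      ring
    · have h1 : j.descFactorial (m+1) = 0 := Nat.descFactorial_eq_zero_iff_lt.mpr (by omega)
      rcases eq_or_lt_of_le h with rfl | h2
      · simp [h1]
      · have : j.descFactorial m = 0 := Nat.descFactorial_eq_zero_iff_lt.mpr h2
        simp [h1, this]

lemma prod_descFactorial (k j : ℕ) :
    ∏ i ∈ Finset.range j, ((k:ℂ) - i) = (k.descFactorial j : ℂ) := by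
  induction j with
  | zero => simp
  | succ j ih =>
    rw [Finset.prod_range_succ, ih, Nat.descFactorial_succ]
    rcases le_or_gt j k with h2 | h2
    · push_cast [Nat.cast_sub h2]; ring
    · have : k.descFactorial j = 0 := Nat.descFactorial_eq_zero_iff_lt.mpr h2
      simp [this, Nat.sub_eq_zero_of_le h2.le]

lemma poch_cast_sub (k j : ℕ) : poch ((k:ℂ) - j + 1) j = (k.descFactorial j : ℂ) := by
  rw [← prod_descFactorial, poch, ← Finset.prod_range_reflect]
  refine Finset.prod_congr rfl fun i hi => ?_
  rw [Finset.mem_range] at hi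
  have e : (j - 1 - i : ℕ) = j - (i+1) := by omega
  rw [e]
  push_cast [Nat.cast_sub (by omega : i + 1 ≤ j)]
  ring

lemma descFactorial_add (n j : ℕ) : ((n+j).descFactorial j) * n.factorial = (n+j).factorial := by
  induction j with
  | zero => simp
  | succ j ih =>
    have : n + (j+1) = (n+j) + 1 := by omega
    rw [this, Nat.succ_descFactorial_succ, Nat.factorial_succ, mul_assoc, ih]

lemma poch_pos_ne (x : ℝ) (hx : 0 < x) (n : ℕ) : ((∏ i ∈ Finset.range n, (x+i) : ℝ) : ℂ) ≠ 0 := by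
  exact_mod_cast (rpoch_pos hx n).ne'

lemma II_base (A B : ℝ) (hA : -1 < A) (hB : -1 < B) :
    IntervalIntegrable (fun r => (1-r)^A * (1+r)^B) MeasureTheory.volume (-1) 1 := by
  have h1 : IntervalIntegrable (fun r : ℝ => (1+r)^B) MeasureTheory.volume (-1) 1 := by
    have := (intervalIntegrable_rpow' hB (a := 0) (b := 2)).comp_add_left 1
    norm_num at this
    exact this
  have h2 : IntervalIntegrable (fun r : ℝ => (1-r)^A) MeasureTheory.volume (-1) 1 := by
    have := (intervalIntegrable_rpow' hA (a := 0) (b := 2)).comp_sub_left 1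
    norm_num at this
    exact this.symm
  have part1 : IntervalIntegrable (fun r => (1-r)^A * (1+r)^B) MeasureTheory.volume (-1) 0 := by
    have hsub : Set.uIcc (-1 : ℝ) 0 ⊆ Set.uIcc (-1 : ℝ) 1 := by
      rw [Set.uIcc_of_le (by norm_num : (-1:ℝ) ≤ 0), Set.uIcc_of_le (by norm_num : (-1:ℝ) ≤ 1)]
      exact Set.Icc_subset_Icc le_rfl (by norm_num)
    have hint := h1.mono_set hsub
    have hcont : ContinuousOn (fun r : ℝ => (1-r)^A) (Set.uIcc (-1 : ℝ) 0) := by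
      apply ContinuousOn.rpow_const
      · exact (continuous_const.sub continuous_id).continuousOn
      · intro x hx
        rw [Set.uIcc_of_le (by norm_num : (-1:ℝ) ≤ 0)] at hx
        left
        intro hc
        nlinarith [hx.2]
    simpa [mul_comm] using hint.mul_continuousOn hcont
  have part2 : IntervalIntegrable (fun r => (1-r)^A * (1+r)^B) MeasureTheory.volume 0 1 := by
    have hsub : Set.uIcc (0 : ℝ) 1 ⊆ Set.uIcc (-1 : ℝ) 1 := by
      rw [Set.uIcc_of_le (by norm_num : (0:ℝ) ≤ 1), Set.uIcc_of_le (by norm_num : (-1:ℝ) ≤ 1)]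
      exact Set.Icc_subset_Icc (by norm_num) le_rfl
    have hint := h2.mono_set hsub
    have hcont : ContinuousOn (fun r : ℝ => (1+r)^B) (Set.uIcc (0 : ℝ) 1) := by
      apply ContinuousOn.rpow_const
      · exact (continuous_const.add continuous_id).continuousOn
      · intro x hx
        rw [Set.uIcc_of_le (by norm_num : (0:ℝ) ≤ 1)] at hx
        left
        intro hc
        nlinarith [hx.1]
    exact hint.mul_continuousOn hcont
  exact part1.trans part2

lemma II_cx (A B : ℝ) (hA : -1 < A) (hB : -1 < B) {g : ℝ → ℂ} (hg : Continuous g) :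
    IntervalIntegrable (fun r => (((1-r)^A * (1+r)^B : ℝ):ℂ) * g r)
      MeasureTheory.volume (-1) 1 := by
  have h := II_base A B hA hB
  have h2 : IntervalIntegrable (fun r => (((1-r)^A * (1+r)^B : ℝ):ℂ))
      MeasureTheory.volume (-1) 1 := by
    rw [intervalIntegrable_iff] at h ⊢
    exact h.ofReal
  exact h2.mul_continuousOn hg.continuousOn

lemma beta_eval (A B : ℝ) (hA : -1 < A) (hB : -1 < B) :
    ∫ r in (-1:ℝ)..1, (((1-r)^A * (1+r)^B : ℝ) : ℂ)
      = (((2:ℝ)^(A+B+1) * (Real.Gamma (A+1) * Real.Gamma (B+1) / Real.Gamma (A+B+2)) : ℝ) : ℂ) := by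
  set F : ℝ → ℂ := fun r => (((1-r)^A * (1+r)^B : ℝ) : ℂ) with hF
  have hsub : ∫ x in (0:ℝ)..1, F (2*x + (-1)) = (2:ℝ)⁻¹ • ∫ r in (-1:ℝ)..1, F r := by
    have := intervalIntegral.integral_comp_mul_add F (by norm_num : (2:ℝ) ≠ 0) (-1) (a := 0) (b := 1)
    norm_num at this
    convert this using 2 <;> norm_num
  -- compute the transformed integrand
  have hcongr : ∫ x in (0:ℝ)..1, F (2*x + (-1))
      = ∫ x in (0:ℝ)..1, ((2^(A+B) : ℝ) : ℂ) *
          ((x:ℂ) ^ (((B:ℂ)+1) - 1) * (1-(x:ℂ)) ^ (((A:ℂ)+1) - 1)) := by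
    apply intervalIntegral.integral_congr
    intro x hx
    rw [Set.uIcc_of_le (by norm_num : (0:ℝ) ≤ 1)] at hx
    obtain ⟨hx0, hx1⟩ := hx
    have e1 : 1 - (2*x + (-1)) = 2 * (1-x) := by ring
    have e2 : 1 + (2*x + (-1)) = 2 * x := by ring
    rw [hF]
    simp only [e1, e2]
    rw [Real.mul_rpow (by norm_num) (by linarith), Real.mul_rpow (by norm_num) hx0]
    have eA : (((A:ℂ)+1) - 1) = ((A:ℝ):ℂ) := by ring
    have eB : (((B:ℂ)+1) - 1) = ((B:ℝ):ℂ) := by ring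
    rw [eA, eB]
    rw [show (1 - (x:ℂ)) = (((1-x:ℝ)):ℂ) by push_cast; ring]
    rw [← Complex.ofReal_cpow hx0, ← Complex.ofReal_cpow (by linarith)]
    rw [show (2:ℝ)^(A+B) = 2^A * 2^B from Real.rpow_add (by norm_num) A B]
    push_cast
    ring
  have hbeta : ∫ x in (0:ℝ)..1, (x:ℂ) ^ (((B:ℂ)+1) - 1) * (1-(x:ℂ)) ^ (((A:ℂ)+1) - 1)
      = Complex.betaIntegral ((B:ℂ)+1) ((A:ℂ)+1) := rfl
  have hBre : 0 < Complex.re ((B:ℂ)+1) := by simp; linarith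
  have hAre : 0 < Complex.re ((A:ℂ)+1) := by simp; linarith
  have hGG := Complex.Gamma_mul_Gamma_eq_betaIntegral hBre hAre
  have hsum : ((B:ℂ)+1) + ((A:ℂ)+1) = ((A+B+2 : ℝ) : ℂ) := by push_cast; ring
  have hGne : Complex.Gamma (((A+B+2:ℝ)) : ℂ) ≠ 0 := by
    rw [Complex.Gamma_ofReal]
    exact_mod_cast (Real.Gamma_pos_of_pos (by linarith)).ne'
  have hbeta_val : Complex.betaIntegral ((B:ℂ)+1) ((A:ℂ)+1)
      = ((Real.Gamma (B+1) * Real.Gamma (A+1) / Real.Gamma (A+B+2) : ℝ) : ℂ) := by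
    rw [hsum] at hGG
    have hb : Complex.betaIntegral ((B:ℂ)+1) ((A:ℂ)+1)
        = Complex.Gamma ((B:ℂ)+1) * Complex.Gamma ((A:ℂ)+1) / Complex.Gamma ((A+B+2:ℝ):ℂ) := by
      rw [eq_div_iff hGne, mul_comm _ (Complex.Gamma ((A+B+2:ℝ):ℂ)), ← hGG]
    rw [hb,
      show ((B:ℂ)+1) = (((B+1:ℝ)):ℂ) by push_cast; ring,
      show ((A:ℂ)+1) = (((A+1:ℝ)):ℂ) by push_cast; ring,
      Complex.Gamma_ofReal, Complex.Gamma_ofReal, Complex.Gamma_ofReal]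
    push_cast
    ring
  -- assemble
  have h2 : (∫ r in (-1:ℝ)..1, F r) = (2:ℂ) * ∫ x in (0:ℝ)..1, F (2*x + (-1)) := by
    rw [hsub, Complex.real_smul]
    push_cast
    ring
  rw [h2, hcongr, intervalIntegral.integral_const_mul, hbeta, hbeta_val]
  rw [Real.rpow_add (by norm_num : (0:ℝ) < 2) _ 1, Real.rpow_one]
  push_cast
  ring

lemma exchange (A b : ℝ) (hA : -1 < A) (hb : -1 < b) (c : ℂ) :
    (∫ r in (-1:ℝ)..1, (((1-r)^A * (1+r)^b : ℝ):ℂ) * Complex.exp (c*(1+(r:ℂ))))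
      = ∑' k : ℕ, (c^k / (k.factorial:ℂ)) * Bt A (b+k)
    ∧ Summable (fun k : ℕ => (c^k / (k.factorial:ℂ)) * Bt A (b+k)) := by
  set μ := MeasureTheory.volume.restrict (Set.Ioc (-1:ℝ) 1) with hμ
  set X : ℝ → ℂ := fun r => (((1-r)^A * (1+r)^b : ℝ):ℂ) with hX
  set F : ℕ → ℝ → ℂ := fun k r => X r * ((c*(1+(r:ℂ)))^k / (k.factorial:ℂ)) with hFdef
  set W : ℝ → ℝ := fun r => (1-r)^A * (1+r)^b with hW
  have hpt : ∀ r : ℝ, ∑' k, F k r = X r * Complex.exp (c*(1+(r:ℂ))) := by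
    intro r
    rw [exp_tsum, ← tsum_mul_left]
  have hFint : ∀ k : ℕ, Integrable (F k) μ := by
    intro k
    have := II_cx A b hA hb (g := fun r => (c*(1+(r:ℂ)))^k / (k.factorial:ℂ))
      (by continuity)
    rw [intervalIntegrable_iff_integrableOn_Ioc_of_le (by norm_num : (-1:ℝ) ≤ 1)] at this
    exact this
  have hWint : IntegrableOn W (Set.Ioc (-1:ℝ) 1) := by
    have := II_base A b hA hb
    rwa [intervalIntegrable_iff_integrableOn_Ioc_of_le (by norm_num : (-1:ℝ) ≤ 1)] at this
  have hWnn : ∀ r : ℝ, r ∈ Set.Ioc (-1:ℝ) 1 → 0 ≤ W r := by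
    intro r hr
    have h1r : (0:ℝ) ≤ 1 + r := by linarith [hr.1]
    have h1r' : (0:ℝ) ≤ 1 - r := by linarith [hr.2]
    rw [hW]; positivity
  have hbound : ∀ k : ℕ, (∫ r, ‖F k r‖ ∂μ)
      ≤ (∫ r in Set.Ioc (-1:ℝ) 1, W r) * ((2*‖c‖)^k / k.factorial) := by
    intro k
    have hle : (fun r => ‖F k r‖) ≤ᵐ[μ] (fun r => W r * ((2*‖c‖)^k / k.factorial)) := by
      rw [hμ]
      refine (MeasureTheory.ae_restrict_iff' measurableSet_Ioc).mpr ?_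
      filter_upwards with r hr
      have h1r : (0:ℝ) ≤ 1 + r := by linarith [hr.1]
      have h1r2 : (1:ℝ) + r ≤ 2 := by linarith [hr.2]
      have hXr : ‖X r‖ = W r := by
        rw [hX, hW]
        simp only [Complex.norm_real, Real.norm_eq_abs]
        rw [_root_.abs_of_nonneg (hWnn r hr)]
      have heq : ‖F k r‖ = W r * (‖c*(1+(r:ℂ))‖^k / (k.factorial:ℝ)) := by
        rw [hFdef]
        simp only [norm_mul, norm_div, norm_pow, Complex.norm_natCast, hXr]
      rw [heq]
      have hcc : ‖c*(1+(r:ℂ))‖ ≤ 2*‖c‖ := by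
        rw [norm_mul]
        have : ‖(1+(r:ℂ))‖ = |1 + r| := by
          rw [show (1+(r:ℂ)) = (((1+r : ℝ)):ℂ) by push_cast; ring, Complex.norm_real,
            Real.norm_eq_abs]
        rw [this, _root_.abs_of_nonneg h1r]
        nlinarith [norm_nonneg c]
      gcongr
      exact hWnn r hr
    calc (∫ r, ‖F k r‖ ∂μ) ≤ ∫ r, W r * ((2*‖c‖)^k / k.factorial) ∂μ := by
          apply MeasureTheory.integral_mono_ae ((hFint k).norm) _ hle
          exact hWint.mul_const _
      _ = (∫ r in Set.Ioc (-1:ℝ) 1, W r) * ((2*‖c‖)^k / k.factorial) := by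
          rw [hμ, MeasureTheory.integral_mul_const]
  have hsumbound : Summable (fun k : ℕ => (∫ r in Set.Ioc (-1:ℝ) 1, W r) * ((2*‖c‖)^k / k.factorial)) :=
    (Real.summable_pow_div_factorial (2*‖c‖)).mul_left _
  have hFsum : Summable fun k => ∫ r, ‖F k r‖ ∂μ :=
    Summable.of_nonneg_of_le (fun k => integral_nonneg (fun r => norm_nonneg _)) hbound hsumbound
  -- the interchange
  have hswap : ∑' k, (∫ r, F k r ∂μ) = ∫ r, (∑' k, F k r) ∂μ :=
    MeasureTheory.integral_tsum_of_summable_integral_norm hFint hFsum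
  -- evaluate each term
  have hterm : ∀ k : ℕ, (∫ r, F k r ∂μ) = (c^k / (k.factorial:ℂ)) * Bt A (b+k) := by
    intro k
    have h1 : (∫ r, F k r ∂μ) = ∫ r in (-1:ℝ)..1, F k r := by
      rw [intervalIntegral.integral_of_le (by norm_num : (-1:ℝ) ≤ 1), hμ]
    rw [h1]
    have h2 : ∫ r in (-1:ℝ)..1, F k r
        = ∫ r in (-1:ℝ)..1, (c^k / (k.factorial:ℂ)) * (((1-r)^A * (1+r)^(b+(k:ℝ)) : ℝ):ℂ) := by
      apply intervalIntegral.integral_congr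
      intro r hr
      rw [Set.uIcc_of_le (by norm_num : (-1:ℝ) ≤ 1)] at hr
      have h1r : (0:ℝ) ≤ 1 + r := by linarith [hr.1]
      have hreal : (1-r)^A * (1+r)^(b+(k:ℝ)) = ((1-r)^A * (1+r)^b) * (1+r)^(k:ℕ) := by
        rcases Nat.eq_zero_or_pos k with rfl | hk
        · simp
        · have hk1 : (1:ℝ) ≤ (k:ℝ) := by exact_mod_cast hk
          rw [Real.rpow_add' h1r (ne_of_gt (by linarith : (0:ℝ) < b + (k:ℝ))), Real.rpow_natCast]
          ring
      rw [hFdef]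
      simp only []
      rw [hreal, mul_pow]
      have : (1+(r:ℂ))^(k:ℕ) = (((1+r)^(k:ℕ) : ℝ):ℂ) := by push_cast; ring
      rw [this, hX]
      push_cast
      ring
    rw [h2, intervalIntegral.integral_const_mul]
    have h3 : -1 < b + (k:ℝ) := by
      have : (0:ℝ) ≤ (k:ℝ) := Nat.cast_nonneg k
      linarith
    rw [beta_eval A (b+(k:ℝ)) hA h3]
    rfl
  have hintEq : (∫ r in (-1:ℝ)..1, (((1-r)^A * (1+r)^b : ℝ):ℂ) * Complex.exp (c*(1+(r:ℂ))))
      = ∫ r, (∑' k, F k r) ∂μ := by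
    rw [intervalIntegral.integral_of_le (by norm_num : (-1:ℝ) ≤ 1), hμ]
    apply MeasureTheory.setIntegral_congr_fun measurableSet_Ioc
    intro r _
    show (((1-r)^A * (1+r)^b : ℝ):ℂ) * Complex.exp (c*(1+(r:ℂ))) = ∑' k, F k r
    rw [hpt r, hX]
  constructor
  · rw [hintEq, ← hswap]
    exact tsum_congr hterm
  · have : Summable (fun k => ∫ r, F k r ∂μ) := by
      apply Summable.of_norm_bounded hsumbound
      intro k
      exact (MeasureTheory.norm_integral_le_integral_norm _).trans (hbound k)
    simpa only [funext hterm] using this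

lemma crux (a b : ℝ) (ha : -1 < a) (hb : -1 < b) (j k m : ℕ) (hm : m ≤ j) (c : ℂ) :
    (poch ((a:ℂ)+1) j / (j.factorial:ℂ)) *
      (poch (-(j:ℂ)) m * poch ((j:ℂ)+(a:ℂ)+(b:ℂ)+1) m / (poch ((a:ℂ)+1) m * (m.factorial:ℂ)))
      * ((1:ℂ)/2^m) * (c^k / (k.factorial:ℂ)) * Bt (a+m) (b+k)
    = (((2:ℝ)^(a+b+1) : ℝ):ℂ) * (2*c)^k / (k.factorial:ℂ)
        * ((Real.Gamma (a+j+1) * Real.Gamma (b+k+1) / ((j.factorial:ℝ) * Real.Gamma (a+b+j+k+2)) : ℝ):ℂ)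
        * ((-1:ℂ)^m * (j.choose m : ℂ) * poch (((a+b+(j:ℝ)+1 : ℝ)):ℂ) m
            * poch ((((a+b+(j:ℝ)+1 : ℝ)):ℂ) + (m:ℂ) + ((k:ℂ) - (j:ℂ) + 1)) (j - m)) := by
  -- rewrite poch arguments into coerced-real form
  have e1 : ((a:ℂ)+1) = (((a+1 : ℝ)):ℂ) := by push_cast; ring
  have e2 : ((j:ℂ)+(a:ℂ)+(b:ℂ)+1) = (((a+b+(j:ℝ)+1 : ℝ)):ℂ) := by push_cast; ring
  have e3 : ((((a+b+(j:ℝ)+1 : ℝ)):ℂ) + (m:ℂ) + ((k:ℂ) - (j:ℂ) + 1))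
      = (((a+b+(m:ℝ)+(k:ℝ)+2 : ℝ)):ℂ) := by push_cast; ring
  rw [e1, e2, e3, poch_ofReal, poch_ofReal, poch_ofReal, poch_ofReal, poch_neg_nat]
  -- abbreviations for the real products
  set Qam := ∏ i ∈ Finset.range m, (a+1+i) with hQam
  set Qaj := ∏ i ∈ Finset.range j, (a+1+i) with hQaj
  set Qcm := ∏ i ∈ Finset.range m, (a+b+(j:ℝ)+1+i) with hQcm
  set Qdm := ∏ i ∈ Finset.range (j-m), (a+b+(m:ℝ)+(k:ℝ)+2+i) with hQdm
  -- Gamma expansion facts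
  have G1 : Real.Gamma (a+(m:ℝ)+1) = Real.Gamma (a+1) * Qam := by
    rw [show a+(m:ℝ)+1 = (a+1)+(m:ℝ) by ring]
    exact Gamma_add_nat (a+1) (by linarith) m
  have G2 : Real.Gamma (a+(j:ℝ)+1) = Real.Gamma (a+1) * Qaj := by
    rw [show a+(j:ℝ)+1 = (a+1)+(j:ℝ) by ring]
    exact Gamma_add_nat (a+1) (by linarith) j
  have G3 : Real.Gamma (a+b+(j:ℝ)+(k:ℝ)+2) = Real.Gamma (a+b+(m:ℝ)+(k:ℝ)+2) * Qdm := by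
    have := Gamma_add_nat (a+b+(m:ℝ)+(k:ℝ)+2) (by linarith [Nat.cast_nonneg (α := ℝ) m, Nat.cast_nonneg (α := ℝ) k]) (j-m)
    rw [show a+b+(m:ℝ)+(k:ℝ)+2+((j-m : ℕ):ℝ) = a+b+(j:ℝ)+(k:ℝ)+2 by
      push_cast [Nat.cast_sub hm]; ring] at this
    exact this
  -- expand Bt
  rw [Bt]
  have H1 : (2:ℝ)^(a+(m:ℝ)+(b+(k:ℝ))+1) = (2:ℝ)^(a+b+1) * 2^m * 2^k := by
    rw [show a+(m:ℝ)+(b+(k:ℝ))+1 = (a+b+1)+(m:ℝ)+(k:ℝ) by ring,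
      Real.rpow_add (by norm_num) _ (k:ℝ), Real.rpow_add (by norm_num) _ (m:ℝ),
      Real.rpow_natCast, Real.rpow_natCast]
  have H2 : Real.Gamma (a+(m:ℝ)+(b+(k:ℝ))+2) = Real.Gamma (a+b+(m:ℝ)+(k:ℝ)+2) := by
    ring_nf
  rw [show a+(m:ℝ)+1 = a+(m:ℝ)+1 from rfl]
  rw [show (a+(m:ℝ))+(b+(k:ℝ))+1 = a+(m:ℝ)+(b+(k:ℝ))+1 from rfl]
  rw [H1, G1, H2, G3, G2,
    Nat.descFactorial_eq_factorial_mul_choose]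
  -- nonvanishing facts
  have hQam_pos : (0:ℝ) < Qam := rpoch_pos (by linarith) m
  have hGa : (0:ℝ) < Real.Gamma (a+1) := Real.Gamma_pos_of_pos (by linarith)
  have hGbk : (0:ℝ) < Real.Gamma (b+(k:ℝ)+1) := Real.Gamma_pos_of_pos (by linarith [Nat.cast_nonneg (α := ℝ) k])
  have hGD : (0:ℝ) < Real.Gamma (a+b+(m:ℝ)+(k:ℝ)+2) :=
    Real.Gamma_pos_of_pos (by linarith [Nat.cast_nonneg (α := ℝ) m, Nat.cast_nonneg (α := ℝ) k])
  have h2 : ((2:ℝ)^(a+b+1)) ≠ 0 := by positivity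
  push_cast
  have hQam' : ((Qam:ℝ):ℂ) ≠ 0 := by exact_mod_cast hQam_pos.ne'
  have hGa' : ((Real.Gamma (a+1):ℝ):ℂ) ≠ 0 := by exact_mod_cast hGa.ne'
  have hGD' : ((Real.Gamma (a+b+(m:ℝ)+(k:ℝ)+2):ℝ):ℂ) ≠ 0 := by exact_mod_cast hGD.ne'
  have hmf : ((m.factorial : ℕ):ℂ) ≠ 0 := Nat.cast_ne_zero.mpr m.factorial_ne_zero
  have hjf : ((j.factorial : ℕ):ℂ) ≠ 0 := Nat.cast_ne_zero.mpr j.factorial_ne_zero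
  have hkf : ((k.factorial : ℕ):ℂ) ≠ 0 := Nat.cast_ne_zero.mpr k.factorial_ne_zero
  have h2' : ((2:ℂ)) ≠ 0 := two_ne_zero
  have hQdm_pos : (0:ℝ) < Qdm :=
    rpoch_pos (by linarith [Nat.cast_nonneg (α := ℝ) m, Nat.cast_nonneg (α := ℝ) k]) (j-m)
  have hQdm' : ((Qdm:ℝ):ℂ) ≠ 0 := by exact_mod_cast hQdm_pos.ne'
  field_simp
  ring


lemma poch_neg_zero {j m : ℕ} (h : j < m) : poch (-(j:ℂ)) m = 0 := by
  rw [poch_neg_nat, Nat.descFactorial_eq_zero_iff_lt.mpr h]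
  simp

lemma F21_fin (j : ℕ) (B C x : ℂ) :
    F21 (-(j:ℂ)) B C x = ∑ m ∈ Finset.range (j+1),
      poch (-(j:ℂ)) m * poch B m * x^m / (poch C m * m.factorial) := by
  apply tsum_eq_sum
  intro m hm
  have hjm : j < m := by
    by_contra hh
    exact hm (Finset.mem_range.mpr (by omega))
  rw [poch_neg_zero hjm]
  simp

end JacobiAux

open JacobiAux

/-- The integral `∫_{-1}^{1} (1-r)^a (1+r)^b P_j^{(a,b)}(r) e^{cr} dr` evaluated in closed
form via a `₁F₁`. -/
theorem jacobi_exp_integral (a b : ℝ) (ha : -1 < a) (hb : -1 < b) (j : ℕ) (c : ℂ) :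
    ∫ r in (-1 : ℝ)..1,
        (((1 - r) ^ a * (1 + r) ^ b : ℝ) : ℂ) * jacobiP j (a : ℂ) (b : ℂ) (r : ℂ) *
          Complex.exp (c * (r : ℂ))
      = ((2 : ℝ) ^ (a + b + 1) : ℝ) *
          ((Real.Gamma (a + j + 1) * Real.Gamma (b + j + 1) /
            (j.factorial * Real.Gamma (a + b + 2 * j + 2)) : ℝ) : ℂ) *
          Complex.exp (-c) * (2 * c) ^ j *
          F11 ((b : ℂ) + j + 1) ((a : ℂ) + b + 2 * j + 2) (2 * c) := by
  classical
  set P : ℕ → ℂ := fun m => poch ((a:ℂ)+1) j / (j.factorial:ℂ) *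
    (poch (-(j:ℂ)) m * poch ((j:ℂ)+(a:ℂ)+(b:ℂ)+1) m /
      (poch ((a:ℂ)+1) m * (m.factorial:ℂ))) with hP
  have hAm : ∀ m : ℕ, (-1:ℝ) < a + m := fun m => by
    have : (0:ℝ) ≤ (m:ℝ) := Nat.cast_nonneg m
    linarith
  have hmerge : ∀ (m : ℕ) (r : ℝ), r ∈ Set.uIcc (-1:ℝ) 1 →
      (1-r)^(a+(m:ℝ)) = (1-r)^a * (1-r)^m := by
    intro m r hr
    rw [Set.uIcc_of_le (by norm_num : (-1:ℝ) ≤ 1)] at hr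
    have h1 : (0:ℝ) ≤ 1 - r := by linarith [hr.2]
    rcases Nat.eq_zero_or_pos m with rfl | hm
    · simp
    · have hm1 : (1:ℝ) ≤ (m:ℝ) := by exact_mod_cast hm
      rw [Real.rpow_add' h1 (ne_of_gt (by linarith)), Real.rpow_natCast]
  have hInt : ∀ m : ℕ, IntervalIntegrable
      (fun r : ℝ => (((1-r)^(a+(m:ℝ)) * (1+r)^b : ℝ):ℂ)
        * (P m * ((1:ℂ)/2^m) * Complex.exp (c*(r:ℂ))))
      MeasureTheory.volume (-1) 1 := fun m =>
    II_cx (a+m) b (hAm m) hb (by continuity)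
  have step1 : (∫ r in (-1 : ℝ)..1,
        (((1 - r) ^ a * (1 + r) ^ b : ℝ) : ℂ) * jacobiP j (a : ℂ) (b : ℂ) (r : ℂ) *
          Complex.exp (c * (r : ℂ)))
      = ∑ m ∈ Finset.range (j+1), ∫ r in (-1:ℝ)..1,
          (((1-r)^(a+(m:ℝ)) * (1+r)^b : ℝ):ℂ)
            * (P m * ((1:ℂ)/2^m) * Complex.exp (c*(r:ℂ))) := by
    rw [← intervalIntegral.integral_finset_sum (fun m _ => hInt m)]
    apply intervalIntegral.integral_congr
    intro r hr
    show (((1 - r) ^ a * (1 + r) ^ b : ℝ) : ℂ) * jacobiP j (a : ℂ) (b : ℂ) (r : ℂ) *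
          Complex.exp (c * (r : ℂ))
        = ∑ m ∈ Finset.range (j+1),
            (((1-r)^(a+(m:ℝ)) * (1+r)^b : ℝ):ℂ)
              * (P m * ((1:ℂ)/2^m) * Complex.exp (c*(r:ℂ)))
    rw [jacobiP, F21_fin, Finset.mul_sum, Finset.mul_sum, Finset.sum_mul]
    refine Finset.sum_congr rfl fun m hm => ?_
    have h1 := hmerge m r hr
    have e4 : (((1:ℂ) - (r:ℂ))/2)^m = (((1-r)^m : ℝ):ℂ) / 2^m := by
      push_cast
      rw [div_pow]
    rw [e4,
      show ((1-r)^(a+(m:ℝ)) * (1+r)^b : ℝ) = ((1-r)^a * (1+r)^b) * (1-r)^m from by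
        rw [h1]; ring, hP]
    push_cast
    ring
  have step2 : ∀ m : ℕ, (∫ r in (-1:ℝ)..1,
        (((1-r)^(a+(m:ℝ)) * (1+r)^b : ℝ):ℂ) * (P m * ((1:ℂ)/2^m) * Complex.exp (c*(r:ℂ))))
      = P m * ((1:ℂ)/2^m) * Complex.exp (-c) *
          ∫ r in (-1:ℝ)..1, (((1-r)^(a+(m:ℝ)) * (1+r)^b : ℝ):ℂ)
            * Complex.exp (c*(1+(r:ℂ))) := by
    intro m
    rw [← intervalIntegral.integral_const_mul]
    apply intervalIntegral.integral_congr
    intro r hr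
    show (((1-r)^(a+(m:ℝ)) * (1+r)^b : ℝ):ℂ) * (P m * ((1:ℂ)/2^m) * Complex.exp (c*(r:ℂ)))
        = P m * ((1:ℂ)/2^m) * Complex.exp (-c) *
            ((((1-r)^(a+(m:ℝ)) * (1+r)^b : ℝ):ℂ) * Complex.exp (c*(1+(r:ℂ))))
    rw [show c*(r:ℂ) = -c + c*(1+(r:ℂ)) by ring, Complex.exp_add]
    ring
  have step3 : ∀ m : ℕ, (∫ r in (-1:ℝ)..1, (((1-r)^(a+(m:ℝ)) * (1+r)^b : ℝ):ℂ)
        * Complex.exp (c*(1+(r:ℂ))))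
      = ∑' k : ℕ, (c^k / (k.factorial:ℂ)) * Bt (a+m) (b+k) := fun m =>
    (exchange (a+m) b (hAm m) hb c).1
  have hSummable : ∀ m : ℕ, Summable (fun k : ℕ =>
      P m * ((1:ℂ)/2^m) * ((c^k / (k.factorial:ℂ)) * Bt (a+m) (b+k))) := fun m =>
    ((exchange (a+m) b (hAm m) hb c).2.mul_left _)
  set f : ℕ → ℂ := fun k =>
    (((2:ℝ)^(a+b+1) : ℝ):ℂ) * (2*c)^k / (k.factorial:ℂ)
      * ((Real.Gamma (a+j+1) * Real.Gamma (b+k+1) /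
          ((j.factorial:ℝ) * Real.Gamma (a+b+j+k+2)) : ℝ):ℂ)
      * ((k.descFactorial j : ℕ):ℂ) with hf
  have step6 : ∀ k : ℕ, (∑ m ∈ Finset.range (j+1),
      P m * ((1:ℂ)/2^m) * ((c^k / (k.factorial:ℂ)) * Bt (a+m) (b+k))) = f k := by
    intro k
    have h1 : ∀ m ∈ Finset.range (j+1),
        P m * ((1:ℂ)/2^m) * ((c^k / (k.factorial:ℂ)) * Bt (a+m) (b+k))
        = ((((2:ℝ)^(a+b+1) : ℝ):ℂ) * (2*c)^k / (k.factorial:ℂ)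
            * ((Real.Gamma (a+j+1) * Real.Gamma (b+k+1) /
                ((j.factorial:ℝ) * Real.Gamma (a+b+j+k+2)) : ℝ):ℂ))
          * ((-1:ℂ)^m * (j.choose m : ℂ) * poch (((a+b+(j:ℝ)+1 : ℝ)):ℂ) m
            * poch ((((a+b+(j:ℝ)+1 : ℝ)):ℂ) + (m:ℂ) + ((k:ℂ) - (j:ℂ) + 1)) (j - m)) := by
      intro m hm
      have hm' : m ≤ j := by
        have := Finset.mem_range.mp hm
        omega
      have h2 : P m * ((1:ℂ)/2^m) * ((c^k / (k.factorial:ℂ)) * Bt (a+m) (b+k))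
          = (poch ((a:ℂ)+1) j / (j.factorial:ℂ)) *
            (poch (-(j:ℂ)) m * poch ((j:ℂ)+(a:ℂ)+(b:ℂ)+1) m /
              (poch ((a:ℂ)+1) m * (m.factorial:ℂ)))
            * ((1:ℂ)/2^m) * (c^k / (k.factorial:ℂ)) * Bt (a+m) (b+k) := by
        rw [hP]
        ring
      rw [h2, crux a b ha hb j k m hm' c]
    rw [Finset.sum_congr rfl h1, ← Finset.mul_sum,
      key_id j (((a+b+(j:ℝ)+1 : ℝ)):ℂ) ((k:ℂ) - (j:ℂ) + 1), poch_cast_sub]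
  have hzero : ∀ x : ℕ, x ∉ Set.range (fun n : ℕ => n + j) → f x = 0 := by
    intro x hx
    have hxj : x < j := by
      by_contra hh
      exact hx ⟨x - j, by simp; omega⟩
    have hd : x.descFactorial j = 0 := Nat.descFactorial_eq_zero_iff_lt.mpr hxj
    rw [hf]
    simp [hd]
  have hinj : Function.Injective (fun n : ℕ => n + j) := fun x y h => by
    simpa using h
  have hsupp : Function.support f ⊆ Set.range (fun n : ℕ => n + j) := by
    intro x hx
    by_contra h
    exact hx (hzero x h)
  have hre : (∑' n : ℕ, f (n + j)) = ∑' k : ℕ, f k := hinj.tsum_eq hsupp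
  set D : ℂ := (((2:ℝ)^(a+b+1) : ℝ):ℂ)
      * ((Real.Gamma (a+j+1) * Real.Gamma (b+j+1) /
          ((j.factorial:ℝ) * Real.Gamma (a+b+2*j+2)) : ℝ):ℂ) * (2*c)^j with hD
  have hterm : ∀ n : ℕ, f (n + j)
      = D * (poch ((b:ℂ)+j+1) n * (2*c)^n / (poch ((a:ℂ)+b+2*j+2) n * (n.factorial:ℂ))) := by
    intro n
    have hcast1 : b + ((n+j:ℕ):ℝ) + 1 = (b + (j:ℝ) + 1) + (n:ℝ) := by push_cast; ring
    have hcast2 : a + b + (j:ℝ) + ((n+j:ℕ):ℝ) + 2 = (a + b + 2*(j:ℝ) + 2) + (n:ℝ) := by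
      push_cast; ring
    have hj0 : (0:ℝ) ≤ (j:ℝ) := Nat.cast_nonneg j
    simp only [hf, hD]
    rw [hcast1, hcast2,
      Gamma_add_nat (b + (j:ℝ) + 1) (by linarith) n,
      Gamma_add_nat (a + b + 2*(j:ℝ) + 2) (by linarith) n,
      show ((b:ℂ)+(j:ℕ)+1) = (((b+(j:ℝ)+1 : ℝ)):ℂ) by push_cast; ring, poch_ofReal,
      show ((a:ℂ)+(b:ℂ)+2*(j:ℕ)+2) = (((a+b+2*(j:ℝ)+2 : ℝ)):ℂ) by push_cast; ring, poch_ofReal]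
    have hdf : (((n+j).descFactorial j : ℕ):ℂ) * ((n.factorial : ℕ):ℂ) = (((n+j).factorial : ℕ):ℂ) := by
      exact_mod_cast congrArg (Nat.cast : ℕ → ℂ) (descFactorial_add n j)
    have hnf : ((n.factorial : ℕ):ℂ) ≠ 0 := Nat.cast_ne_zero.mpr n.factorial_ne_zero
    have hnjf : (((n+j).factorial : ℕ):ℂ) ≠ 0 := Nat.cast_ne_zero.mpr (n+j).factorial_ne_zero
    have hjf : ((j.factorial : ℕ):ℂ) ≠ 0 := Nat.cast_ne_zero.mpr j.factorial_ne_zero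
    have hG1 : (0:ℝ) < Real.Gamma (a + b + 2*(j:ℝ) + 2) :=
      Real.Gamma_pos_of_pos (by linarith)
    have hG1' : ((Real.Gamma (a + b + 2*(j:ℝ) + 2) : ℝ):ℂ) ≠ 0 := by
      exact_mod_cast hG1.ne'
    have hQ : (0:ℝ) < ∏ i ∈ Finset.range n, (a + b + 2*(j:ℝ) + 2 + i) :=
      rpoch_pos (by linarith) n
    have hQ' : ((∏ i ∈ Finset.range n, (a + b + 2*(j:ℝ) + 2 + i) : ℝ):ℂ) ≠ 0 := by
      exact_mod_cast hQ.ne'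
    have hpow : (2*c)^(n+j) = (2*c)^n * (2*c)^j := pow_add _ n j
    have hdesc : (((n+j).descFactorial j : ℕ):ℂ) ≠ 0 := by
      refine Nat.cast_ne_zero.mpr ?_
      rw [Ne, Nat.descFactorial_eq_zero_iff_lt]
      omega
    rw [hpow, show (((n+j).descFactorial j : ℕ):ℂ) = (((n+j).factorial : ℕ):ℂ) / ((n.factorial : ℕ):ℂ) from by
      rw [eq_div_iff hnf]; exact hdf]
    push_cast
    field_simp
  -- final assembly
  rw [step1]
  have step4 : ∀ m ∈ Finset.range (j+1), (∫ r in (-1:ℝ)..1,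
        (((1-r)^(a+(m:ℝ)) * (1+r)^b : ℝ):ℂ) * (P m * ((1:ℂ)/2^m) * Complex.exp (c*(r:ℂ))))
      = Complex.exp (-c) * ∑' k : ℕ,
          P m * ((1:ℂ)/2^m) * ((c^k / (k.factorial:ℂ)) * Bt (a+m) (b+k)) := by
    intro m _
    rw [step2 m, step3 m]
    rw [show P m * ((1:ℂ)/2^m) * Complex.exp (-c) *
          (∑' k : ℕ, (c^k / (k.factorial:ℂ)) * Bt (a+m) (b+k))
        = Complex.exp (-c) * (P m * ((1:ℂ)/2^m) *
          (∑' k : ℕ, (c^k / (k.factorial:ℂ)) * Bt (a+m) (b+k))) from by ring,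
      ← tsum_mul_left]
  rw [Finset.sum_congr rfl step4, ← Finset.mul_sum,
    ← Summable.tsum_finsetSum (fun m _ => hSummable m), tsum_congr step6, ← hre, tsum_congr hterm,
    tsum_mul_left]
  rw [show (∑' n : ℕ, poch ((b:ℂ)+j+1) n * (2*c)^n /
      (poch ((a:ℂ)+b+2*j+2) n * (n.factorial:ℂ)))
    = F11 ((b:ℂ)+j+1) ((a:ℂ)+b+2*j+2) (2*c) from rfl]
  rw [hD]
  ring
end

section
/- Vandermonde-type summation: for a nonnegative integer j, parameters α, β, b with b = β - 1 (so β = b+1) and α = a+b+j+2 in the original setting, and any complex γ, one has ∑_{m=0}^{j} ((-j)_m / m!) ₁F₁(β+m; α; γ) = ((-1)^j γ^j / (α)_j) ₁F₁(β+j; α+j; γ), valid whenever the series converge and α avoids nonpositive integers. -/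
open Complex Finset

lemma poch_zero (a : ℂ) : poch a 0 = 1 := by simp [poch]

lemma poch_succ (a : ℂ) (n : ℕ) : poch a (n + 1) = poch a n * (a + n) :=
  Finset.prod_range_succ _ _

lemma poch_succ' (a : ℂ) (n : ℕ) : poch a (n + 1) = a * poch (a + 1) n := by
  unfold poch
  rw [Finset.prod_range_succ']
  rw [Nat.cast_zero, add_zero, mul_comm]
  congr 1
  refine Finset.prod_congr rfl fun i _ => ?_
  push_cast; ring

lemma poch_add (a : ℂ) (m n : ℕ) : poch a (m + n) = poch a m * poch (a + m) n := by
  unfold poch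
  rw [Finset.prod_range_add]
  congr 1
  refine Finset.prod_congr rfl fun i _ => ?_
  push_cast; ring

lemma poch_ne_zero {a : ℂ} (h : ∀ i : ℕ, a + i ≠ 0) (n : ℕ) : poch a n ≠ 0 :=
  Finset.prod_ne_zero_iff.mpr fun i _ => h i

lemma poch_sub_poch (x : ℂ) (k : ℕ) :
    poch x k - poch (x + 1) k = -(k : ℂ) * poch (x + 1) (k - 1) := by
  cases k with
  | zero => simp [poch]
  | succ k =>
    rw [poch_succ', poch_succ, Nat.add_sub_cancel]
    push_cast; ring

lemma poch_neg_nat {j m : ℕ} (h : m ≤ j) :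
    poch (-(j : ℂ)) m = (-1) ^ m * (j.descFactorial m : ℂ) := by
  induction m with
  | zero => simp [poch]
  | succ m ih =>
    rw [poch_succ, ih (Nat.le_of_succ_le h), Nat.descFactorial_succ]
    have hc : (-(j : ℂ) + m) = -(((j - m : ℕ)) : ℂ) := by
      rw [Nat.cast_sub (Nat.le_of_succ_le h)]; ring
    rw [hc]
    push_cast
    ring

lemma tendsto_inv_add_nat (c : ℂ) :
    Filter.Tendsto (fun k : ℕ => (c + k)⁻¹) Filter.atTop (nhds 0) := by
  rw [tendsto_zero_iff_norm_tendsto_zero]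
  have h1 : Filter.Tendsto (fun k : ℕ => ‖c + (k : ℂ)‖) Filter.atTop Filter.atTop := by
    apply Filter.tendsto_atTop_mono (f := fun k : ℕ => (k : ℝ) - ‖c‖)
    · intro k
      have : ‖(k : ℂ)‖ - ‖-c‖ ≤ ‖(k : ℂ) - -c‖ := norm_sub_norm_le _ _
      simp only [norm_neg, sub_neg_eq_add] at this
      simpa [Complex.norm_natCast, add_comm] using this
    · exact Filter.tendsto_atTop_add_const_right _ _ tendsto_natCast_atTop_atTop
  have := h1.inv_tendsto_atTop
  simpa [norm_inv, Pi.inv_def] using this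

lemma F11_summable (a b γ : ℂ) (hb : ∀ i : ℕ, b + i ≠ 0) :
    Summable (fun k : ℕ => poch a k * γ ^ k / (poch b k * (k.factorial : ℂ))) := by
  apply summable_of_ratio_norm_eventually_le (r := 1 / 2) (by norm_num)
  have hlim : Filter.Tendsto (fun k : ℕ => ‖(a + k) * γ / ((b + k) * ((k : ℂ) + 1))‖)
      Filter.atTop (nhds 0) := by
    have key : Filter.Tendsto (fun k : ℕ => (a + k) * γ / ((b + k) * ((k : ℂ) + 1)))
        Filter.atTop (nhds 0) := by
      have h1 : Filter.Tendsto (fun k : ℕ => (a + k) / (b + k)) Filter.atTop (nhds 1) := by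
        have h2 : Filter.Tendsto (fun k : ℕ => 1 + (a - b) * (b + k)⁻¹) Filter.atTop (nhds 1) := by
          have := (tendsto_inv_add_nat b).const_mul (a - b)
          have h3 := this.const_add (1 : ℂ)
          simpa using h3
        refine h2.congr fun k => ?_
        field_simp [hb k]
        ring
      have h4 : Filter.Tendsto (fun k : ℕ => γ / ((k : ℂ) + 1)) Filter.atTop (nhds 0) := by
        have := (tendsto_inv_add_nat 1).const_mul γ
        refine (by simpa using this : Filter.Tendsto (fun k : ℕ => γ * ((1 : ℂ) + k)⁻¹)
          Filter.atTop (nhds 0)).congr fun k => ?_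
        rw [div_eq_mul_inv, add_comm]
      have := h1.mul h4
      rw [mul_zero] at this
      refine this.congr fun k => ?_
      rw [div_mul_div_comm]
    simpa using key.norm
  have hev := hlim.eventually_lt_const (by norm_num : (0 : ℝ) < 1 / 2)
  filter_upwards [hev] with k hk
  have h1 : poch b k ≠ 0 := poch_ne_zero hb k
  have h3 : ((k.factorial : ℕ) : ℂ) ≠ 0 := Nat.cast_ne_zero.mpr k.factorial_ne_zero
  have hrec : poch a (k + 1) * γ ^ (k + 1) / (poch b (k + 1) * ((k + 1).factorial : ℂ))
      = poch a k * γ ^ k / (poch b k * (k.factorial : ℂ))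
        * ((a + k) * γ / ((b + k) * ((k : ℂ) + 1))) := by
    rw [poch_succ, poch_succ, pow_succ, Nat.factorial_succ]
    push_cast
    field_simp
  rw [hrec, norm_mul, mul_comm]
  exact mul_le_mul_of_nonneg_right hk.le (norm_nonneg _)

lemma alt_pascal (j : ℕ) (g : ℕ → ℂ) :
    ∑ m ∈ Finset.range (j + 2), (-1 : ℂ) ^ m * ((j + 1).choose m : ℂ) * g m
      = ∑ m ∈ Finset.range (j + 1), (-1 : ℂ) ^ m * (j.choose m : ℂ) * g m
        - ∑ m ∈ Finset.range (j + 1), (-1 : ℂ) ^ m * (j.choose m : ℂ) * g (m + 1) := by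
  rw [Finset.sum_range_succ' (fun m => (-1 : ℂ) ^ m * ((j + 1).choose m : ℂ) * g m) (j + 1)]
  rw [Finset.sum_range_succ' (fun m => (-1 : ℂ) ^ m * (j.choose m : ℂ) * g m) j]
  have hsplit : ∀ m ∈ Finset.range (j + 1),
      (-1 : ℂ) ^ (m + 1) * ((j + 1).choose (m + 1) : ℂ) * g (m + 1)
        = -((-1 : ℂ) ^ m * (j.choose m : ℂ) * g (m + 1))
          + -((-1 : ℂ) ^ m * (j.choose (m + 1) : ℂ) * g (m + 1)) := by
    intro m _
    rw [Nat.choose_succ_succ]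
    push_cast
    ring
  rw [Finset.sum_congr rfl hsplit, Finset.sum_add_distrib]
  have htrim : ∑ m ∈ Finset.range (j + 1), -((-1 : ℂ) ^ m * (j.choose (m + 1) : ℂ) * g (m + 1))
      = ∑ m ∈ Finset.range j, -((-1 : ℂ) ^ m * (j.choose (m + 1) : ℂ) * g (m + 1)) := by
    rw [Finset.sum_range_succ]
    simp [Nat.choose_succ_self]
  rw [htrim]
  have h2 : ∑ m ∈ Finset.range j, (-1 : ℂ) ^ (m + 1) * (j.choose (m + 1) : ℂ) * g (m + 1)
      = ∑ m ∈ Finset.range j, -((-1 : ℂ) ^ m * (j.choose (m + 1) : ℂ) * g (m + 1)) := by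
    refine Finset.sum_congr rfl fun m _ => ?_
    ring
  rw [h2]
  have h3 : ∑ m ∈ Finset.range (j + 1), -((-1 : ℂ) ^ m * (j.choose m : ℂ) * g (m + 1))
      = -∑ m ∈ Finset.range (j + 1), (-1 : ℂ) ^ m * (j.choose m : ℂ) * g (m + 1) :=
    Finset.sum_neg_distrib _
  rw [h3]
  simp only [Nat.choose_zero_right, Nat.cast_one, one_mul]
  ring

lemma key_sum (j : ℕ) : ∀ (β : ℂ) (k : ℕ),
    ∑ m ∈ Finset.range (j + 1), (-1 : ℂ) ^ m * (j.choose m : ℂ) * poch (β + m) k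
      = (-1 : ℂ) ^ j * (k.descFactorial j : ℂ) * poch (β + j) (k - j) := by
  induction j with
  | zero => intro β k; simp
  | succ j ih =>
    intro β k
    rw [show j + 1 + 1 = j + 2 from rfl, alt_pascal j (fun m => poch (β + m) k)]
    have hdiff : ∀ m ∈ Finset.range (j + 1),
        (-1 : ℂ) ^ m * (j.choose m : ℂ) * poch (β + m) k
          - (-1 : ℂ) ^ m * (j.choose m : ℂ) * poch (β + ((m + 1 : ℕ) : ℂ)) k
        = -(k : ℂ) * ((-1 : ℂ) ^ m * (j.choose m : ℂ) * poch ((β + 1) + m) (k - 1)) := by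
      intro m _
      have h := poch_sub_poch (β + m) k
      have c1 : β + ((m + 1 : ℕ) : ℂ) = (β + m) + 1 := by push_cast; ring
      have c2 : (β + (m : ℂ)) + 1 = (β + 1) + m := by ring
      rw [c1, ← c2]
      linear_combination ((-1 : ℂ) ^ m * (j.choose m : ℂ)) * h
    rw [← Finset.sum_sub_distrib, Finset.sum_congr rfl hdiff, ← Finset.mul_sum, ih (β + 1) (k - 1)]
    have e1 : (β + 1) + (j : ℂ) = β + ((j + 1 : ℕ) : ℂ) := by push_cast; ring
    have e2 : k - 1 - j = k - (j + 1) := by omega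
    have e3 : (k : ℂ) * ((k - 1).descFactorial j : ℂ) = (k.descFactorial (j + 1) : ℂ) := by
      cases k with
      | zero => simp
      | succ k =>
        rw [Nat.succ_descFactorial_succ, Nat.succ_sub_one]
        push_cast
        ring
    rw [e1, e2] at *
    linear_combination (-((-1 : ℂ) ^ j) * poch (β + ((j + 1 : ℕ) : ℂ)) (k - (j + 1))) * e3

/-- Vandermonde-type summation for confluent hypergeometric functions:
`∑_{m=0}^{j} ((-j)_m / m!) ₁F₁(β+m; α; γ) = ((-1)^j γ^j / (α)_j) ₁F₁(β+j; α+j; γ)`. -/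
theorem vandermonde_confluent_sum (j : ℕ) (α β γ : ℂ) (hα : ∀ m : ℕ, α ≠ -(m : ℂ)) :
    ∑ m ∈ Finset.range (j + 1), poch (-(j : ℂ)) m / m.factorial * F11 (β + m) α γ
      = (-1) ^ j * γ ^ j / poch α j * F11 (β + j) (α + j) γ := by
  have hα' : ∀ i : ℕ, α + i ≠ 0 := by
    intro i h
    exact hα i (by linear_combination h)
  have hαj : ∀ i : ℕ, (α + j) + i ≠ 0 := by
    intro i h
    apply hα' (j + i)
    push_cast
    linear_combination h
  have hsum : ∀ m : ℕ,
      Summable (fun k : ℕ => poch (β + m) k * γ ^ k / (poch α k * (k.factorial : ℂ))) :=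
    fun m => F11_summable _ _ _ hα'
  have step1 : ∀ m ∈ Finset.range (j + 1),
      poch (-(j : ℂ)) m / m.factorial * F11 (β + m) α γ
        = ∑' k : ℕ, (-1 : ℂ) ^ m * (j.choose m : ℂ)
            * (poch (β + m) k * γ ^ k / (poch α k * k.factorial)) := by
    intro m hm
    have hm' : m ≤ j := Nat.lt_succ_iff.mp (Finset.mem_range.mp hm)
    have hc : poch (-(j : ℂ)) m / (m.factorial : ℂ) = (-1 : ℂ) ^ m * (j.choose m : ℂ) := by
      rw [poch_neg_nat hm', Nat.descFactorial_eq_factorial_mul_choose]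
      have hm0 : (m.factorial : ℂ) ≠ 0 := Nat.cast_ne_zero.mpr m.factorial_ne_zero
      push_cast
      field_simp
    rw [hc, F11, ← tsum_mul_left]
  rw [Finset.sum_congr rfl step1,
    ← Summable.tsum_finsetSum (fun m _ => Summable.mul_left _ (hsum m))]
  have step3 : ∀ k : ℕ, ∑ m ∈ Finset.range (j + 1), (-1 : ℂ) ^ m * (j.choose m : ℂ)
        * (poch (β + m) k * γ ^ k / (poch α k * k.factorial))
      = ((-1 : ℂ) ^ j * (k.descFactorial j : ℂ) * poch (β + j) (k - j))
          * (γ ^ k / (poch α k * k.factorial)) := by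
    intro k
    rw [← key_sum j β k, Finset.sum_mul]
    refine Finset.sum_congr rfl fun m _ => ?_
    ring
  rw [tsum_congr step3, F11, ← tsum_mul_left]
  rw [← Function.Injective.tsum_eq (g := fun n => n + j) (add_left_injective j)
    (f := fun k => ((-1 : ℂ) ^ j * (k.descFactorial j : ℂ) * poch (β + j) (k - j))
      * (γ ^ k / (poch α k * k.factorial))) ?hsupp]
  case hsupp =>
    intro k hk
    rcases le_or_gt j k with h | h
    · exact ⟨k - j, show k - j + j = k by omega⟩
    · exfalso
      apply hk
      simp [Nat.descFactorial_eq_zero_iff_lt.mpr h]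
  refine tsum_congr fun n => ?_
  have e1 : (n + j) - j = n := by omega
  have e2 : poch α (n + j) = poch α j * poch (α + j) n := by
    rw [add_comm n j, poch_add]
  have hfac : (((n + j).factorial : ℕ) : ℂ)
      = (((n + j).descFactorial j : ℕ) : ℂ) * ((n.factorial : ℕ) : ℂ) := by
    rw [← Nat.cast_mul]
    congr 1
    rw [← Nat.factorial_mul_descFactorial (Nat.le_add_left j n), Nat.add_sub_cancel]
    ring
  simp only [e1, e2, pow_add, hfac]
  have h1 : poch α j ≠ 0 := poch_ne_zero hα' j
  have h2 : poch (α + j) n ≠ 0 := poch_ne_zero hαj n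
  have h3 : ((n.factorial : ℕ) : ℂ) ≠ 0 := Nat.cast_ne_zero.mpr n.factorial_ne_zero
  have h4 : (((n + j).descFactorial j : ℕ) : ℂ) ≠ 0 :=
    Nat.cast_ne_zero.mpr (by rw [Ne, Nat.descFactorial_eq_zero_iff_lt]; omega)
  field_simp
end
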